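/- Suppose every single node i satisfies b_i ≤ C_max, every single edge e = {i,j} satisfies c_e + b_i + b_j ≤ C_max, and for every O/D pair w there exists a path Path_w from w^s to w^t of length at most u^w whose total construction cost is at most C_max. Then the convex hull of the projection onto (x,y,z) of the feasible region of the relaxed Maximal Covering Network Design formulation is full-dimensional, i.e. has dimension |N| + |E| + |W|. -/

import Mathlib

namespace Stmt3

variable {V E W : Type*}

def arcSrc (ends : E → V × V) : E × Bool → V
  | (e, true) => (ends e).1
  | (e, false) => (ends e).2

def arcDst (ends : E → V × V) : E × Bool → V
  | (e, true) => (ends e).2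
  | (e, false) => (ends e).1

def IsWalk (ends : E → V × V) : V → V → List (E × Bool) → Prop
  | s, t, [] => s = t
  | s, t, a :: L => arcSrc ends a = s ∧ IsWalk ends (arcDst ends a) t L

def IsPath (ends : E → V × V) (s t : V) (L : List (E × Bool)) : Prop :=
  IsWalk ends s t L ∧ (s :: L.map (arcDst ends)).Nodup

/-- Total length of a walk. -/
def walkLen (d : E → ℝ) (L : List (E × Bool)) : ℝ :=
  (L.map fun a => d a.1).sum

/-- Construction cost of a path starting at `s`: edge costs plus node costs. -/
def pathCost (ends : E → V × V) (c : E → ℝ) (b : V → ℝ) (s : V)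
    (L : List (E × Bool)) : ℝ :=
  (L.map fun a => c a.1).sum + b s + (L.map fun a => b (arcDst ends a)).sum

/-- The projection onto `(y, x, z)` of the feasible region of (MC). -/
def Feas [Fintype V] [Fintype E]
    (ends : E → V × V) (c : E → ℝ) (b : V → ℝ) (d : E → ℝ)
    (u : W → ℝ) (orig dest : W → V) (Cmax : ℝ)
    (p : (V → ℝ) × (E → ℝ) × (W → ℝ)) : Prop :=
  (∀ i, p.1 i = 0 ∨ p.1 i = 1) ∧ (∀ e, p.2.1 e = 0 ∨ p.2.1 e = 1) ∧
  (∀ w, p.2.2 w = 0 ∨ p.2.2 w = 1) ∧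
  ((∑ e : E, c e * p.2.1 e) + (∑ i : V, b i * p.1 i) ≤ Cmax) ∧
  (∀ e : E, p.2.1 e ≤ p.1 (ends e).1 ∧ p.2.1 e ≤ p.1 (ends e).2) ∧
  (∀ w : W, p.2.2 w = 1 →
      ∃ L : List (E × Bool), IsPath ends (orig w) (dest w) L ∧
        (∀ a ∈ L, p.2.1 a.1 = 1) ∧ walkLen d L ≤ u w)

open scoped Classical in
/-- Indicator function of a predicate, with real values. -/
noncomputable def ind {α : Type*} (P : α → Prop) (a : α) : ℝ :=
  if P a then 1 else 0

lemma ind_of {α : Type*} {P : α → Prop} {a : α} (h : P a) : ind P a = 1 := by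
  simp [ind, h]

lemma ind_of_not {α : Type*} {P : α → Prop} {a : α} (h : ¬ P a) : ind P a = 0 := by
  simp [ind, h]

lemma ind_nonneg {α : Type*} (P : α → Prop) (a : α) : 0 ≤ ind P a := by
  classical
  unfold ind; split <;> norm_num

lemma ind_binary {α : Type*} (P : α → Prop) (a : α) : ind P a = 0 ∨ ind P a = 1 := by
  classical
  unfold ind; split <;> simp

lemma toFinset_sum_le {α : Type*} [DecidableEq α] (f : α → ℝ) (hf : ∀ a, 0 ≤ f a) :
    ∀ l : List α, (∑ a ∈ l.toFinset, f a) ≤ (l.map f).sum := by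
  intro l
  induction l with
  | nil => simp
  | cons a l ih =>
      by_cases h : a ∈ l.toFinset
      · have : (a :: l).toFinset = l.toFinset := by
          simp [List.toFinset_cons, Finset.insert_eq_self.2 h]
        rw [this]
        simp only [List.map_cons, List.sum_cons]
        linarith [hf a]
      · rw [List.toFinset_cons, Finset.sum_insert h]
        simp only [List.map_cons, List.sum_cons]
        linarith

lemma sum_mul_ind_le {α : Type*} [Fintype α] (f : α → ℝ) (hf : ∀ a, 0 ≤ f a)
    (l : List α) : (∑ a : α, f a * ind (· ∈ l) a) ≤ (l.map f).sum := by
  classical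
  have h1 : (∑ a : α, f a * ind (· ∈ l) a) = ∑ a ∈ l.toFinset, f a := by
    rw [← Finset.sum_filter_add_sum_filter_not Finset.univ (· ∈ l)]
    have h2 : ∀ a ∈ Finset.univ.filter (· ∈ l), f a * ind (· ∈ l) a = f a := by
      intro a ha
      rw [ind_of (by simpa using ha)]; ring
    have h3 : ∀ a ∈ Finset.univ.filter (¬ · ∈ l), f a * ind (· ∈ l) a = 0 := by
      intro a ha
      rw [ind_of_not (by simpa using ha)]; ring
    rw [Finset.sum_congr rfl h2, Finset.sum_congr rfl h3, Finset.sum_const_zero, add_zero]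
    apply Finset.sum_congr _ (fun _ _ => rfl)
    ext a; simp
  rw [h1]
  exact toFinset_sum_le f hf l

lemma walk_src_mem (ends : E → V × V) :
    ∀ {s t : V} {L : List (E × Bool)}, IsWalk ends s t L →
      ∀ a ∈ L, arcSrc ends a ∈ s :: L.map (arcDst ends) := by
  intro s t L
  induction L generalizing s with
  | nil => intro _ a ha; simp at ha
  | cons a0 L ih =>
      rintro ⟨hsrc, hw⟩ a ha
      rcases List.mem_cons.1 ha with rfl | ha
      · simp [hsrc]
      · have := ih hw a ha
        rcases List.mem_cons.1 this with h | h
        · simp [h]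
        · simp [List.mem_cons, h]

lemma rep {α : Type*} [Fintype α] (f : α → ℝ) :
    ∑ a : α, f a • ind (· ∈ [a]) = f := by
  classical
  funext j
  rw [Finset.sum_apply]
  have h : ∀ a : α, (f a • ind (· ∈ [a])) j = if a = j then f a else 0 := by
    intro a
    rw [Pi.smul_apply, smul_eq_mul]
    by_cases h : a = j
    · subst h; rw [ind_of (List.mem_singleton_self a)]; simp
    · rw [ind_of_not (by simp [Ne.symm h] : ¬ j ∈ [a])]; simp [h]
  rw [Finset.sum_congr rfl fun a _ => h a, Finset.sum_ite_eq']
  simp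

/-- under the stated cost assumptions, the convex hull of the projected
feasible region of the relaxed (MC) formulation is full-dimensional, i.e. its affine
span is the whole space `ℝ^N × ℝ^E × ℝ^W`. -/
theorem full_dimensional [Fintype V] [Fintype E] [Fintype W] [Nonempty V]
    (ends : E → V × V) (c : E → ℝ) (b : V → ℝ) (d : E → ℝ)
    (u : W → ℝ) (orig dest : W → V) (Cmax : ℝ)
    (hb : ∀ i, 0 ≤ b i) (hc : ∀ e, 0 ≤ c e)
    (hnode : ∀ i, b i ≤ Cmax)
    (hedge : ∀ e, c e + b (ends e).1 + b (ends e).2 ≤ Cmax)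
    (hpath : ∀ w : W, ∃ L : List (E × Bool),
        IsPath ends (orig w) (dest w) L ∧ walkLen d L ≤ u w ∧
        pathCost ends c b (orig w) L ≤ Cmax) :
    affineSpan ℝ (convexHull ℝ {p | Feas ends c b d u orig dest Cmax p}) = ⊤ := by
  classical
  rw [affineSpan_convexHull]
  set S : Set ((V → ℝ) × (E → ℝ) × (W → ℝ)) :=
    {p | Feas ends c b d u orig dest Cmax p} with hS
  obtain ⟨i0⟩ := ‹Nonempty V›
  have hC0 : (0 : ℝ) ≤ Cmax := le_trans (hb i0) (hnode i0)
  -- membership of the zero point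
  have h0 : (0 : (V → ℝ) × (E → ℝ) × (W → ℝ)) ∈ S := by
    refine ⟨fun i => Or.inl rfl, fun e => Or.inl rfl, fun w => Or.inl rfl, ?_, ?_, ?_⟩
    · simpa using hC0
    · intro e; simp
    · intro w hw; exact absurd hw (by norm_num)
  -- the node points
  have hV : ∀ i : V, ((ind (· ∈ [i]), 0, 0) : (V → ℝ) × (E → ℝ) × (W → ℝ)) ∈ S := by
    intro i
    refine ⟨fun j => ind_binary _ j, fun e => Or.inl rfl, fun w => Or.inl rfl, ?_, ?_, ?_⟩
    · have := sum_mul_ind_le b hb [i]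
      simp only [List.map_cons, List.map_nil, List.sum_cons, List.sum_nil, add_zero] at this
      calc (∑ e : E, c e * (0:ℝ)) + (∑ j : V, b j * ind (· ∈ [i]) j)
          ≤ 0 + b i := by simpa using this
        _ ≤ Cmax := by simpa using hnode i
    · intro e; constructor <;> exact le_trans (le_refl 0) (ind_nonneg _ _)
    · intro w hw; exact absurd hw (by norm_num)
  -- the edge points
  have hE : ∀ e : E,
      ((ind (· ∈ [(ends e).1, (ends e).2]), ind (· ∈ [e]), 0) :
        (V → ℝ) × (E → ℝ) × (W → ℝ)) ∈ S := by
    intro e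
    refine ⟨fun j => ind_binary _ j, fun e' => ind_binary _ e', fun w => Or.inl rfl,
      ?_, ?_, ?_⟩
    · have h1 := sum_mul_ind_le c hc [e]
      have h2 := sum_mul_ind_le b hb [(ends e).1, (ends e).2]
      simp only [List.map_cons, List.map_nil, List.sum_cons, List.sum_nil, add_zero] at h1 h2
      have := hedge e
      linarith
    · intro e'
      dsimp only
      by_cases h : e' = e
      · subst h
        rw [ind_of (by simp : e' ∈ [e'])]
        constructor
        · rw [ind_of (by simp : (ends e').1 ∈ [(ends e').1, (ends e').2])]
        · rw [ind_of (by simp : (ends e').2 ∈ [(ends e').1, (ends e').2])]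
      · rw [ind_of_not (by simp [h])]
        exact ⟨ind_nonneg _ _, ind_nonneg _ _⟩
    · intro w hw; exact absurd hw (by norm_num)
  -- the O/D-pair points
  have hW : ∀ w : W, ∃ L : List (E × Bool), IsPath ends (orig w) (dest w) L ∧
      ((ind (· ∈ orig w :: L.map (arcDst ends)), ind (· ∈ L.map Prod.fst), ind (· ∈ [w])) :
        (V → ℝ) × (E → ℝ) × (W → ℝ)) ∈ S := by
    intro w
    obtain ⟨L, hLpath, hLlen, hLcost⟩ := hpath w
    refine ⟨L, hLpath, fun j => ind_binary _ j, fun e => ind_binary _ e,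
      fun w' => ind_binary _ w', ?_, ?_, ?_⟩
    · have h1 := sum_mul_ind_le c hc (L.map Prod.fst)
      have h2 := sum_mul_ind_le b hb (orig w :: L.map (arcDst ends))
      rw [List.map_map] at h1
      simp only [List.map_cons, List.sum_cons, List.map_map] at h2
      have hcost : ((L.map (c ∘ Prod.fst)).sum + (b (orig w) + (L.map (b ∘ arcDst ends)).sum))
          ≤ Cmax := by
        have : pathCost ends c b (orig w) L =
            (L.map (c ∘ Prod.fst)).sum + b (orig w) + (L.map (b ∘ arcDst ends)).sum := by
          simp [pathCost, Function.comp_def]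
        rw [this] at hLcost
        linarith
      linarith
    · intro e
      dsimp only
      by_cases h : e ∈ L.map Prod.fst
      · obtain ⟨a, haL, hae⟩ := List.mem_map.1 h
        have hsrc : arcSrc ends a ∈ orig w :: L.map (arcDst ends) :=
          walk_src_mem ends hLpath.1 a haL
        have hdst : arcDst ends a ∈ orig w :: L.map (arcDst ends) :=
          List.mem_cons_of_mem _ (List.mem_map_of_mem (f := arcDst ends) haL)
        have hboth : (ends e).1 ∈ orig w :: L.map (arcDst ends) ∧
            (ends e).2 ∈ orig w :: L.map (arcDst ends) := by
          obtain ⟨e', bl⟩ := a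
          cases hae
          cases bl
          · exact ⟨hdst, hsrc⟩
          · exact ⟨hsrc, hdst⟩
        rw [ind_of h, ind_of hboth.1, ind_of hboth.2]
        exact ⟨le_refl _, le_refl _⟩
      · rw [ind_of_not h]
        exact ⟨ind_nonneg _ _, ind_nonneg _ _⟩
    · intro w' hw'
      dsimp only at hw'
      have hww' : w' = w := by
        by_contra hne
        rw [ind_of_not (by simp [hne])] at hw'
        norm_num at hw'
      subst hww'
      refine ⟨L, hLpath, ?_, hLlen⟩
      intro a ha
      exact ind_of (List.mem_map_of_mem (f := Prod.fst) ha)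
  -- vsub to membership in the vector span
  have mem0 : ∀ p ∈ S, p ∈ vectorSpan ℝ S := by
    intro p hp
    have := vsub_mem_vectorSpan ℝ hp h0
    simpa using this
  set M : Submodule ℝ ((V → ℝ) × (E → ℝ) × (W → ℝ)) := vectorSpan ℝ S with hM
  -- all pure-y vectors are in M
  have stepV : ∀ f : V → ℝ, ((f, 0, 0) : (V → ℝ) × (E → ℝ) × (W → ℝ)) ∈ M := by
    intro f
    have hrep : ((f, 0, 0) : (V → ℝ) × (E → ℝ) × (W → ℝ)) =
        ∑ i : V, f i • ((ind (· ∈ [i]), 0, 0) : (V → ℝ) × (E → ℝ) × (W → ℝ)) := by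
      rw [Prod.ext_iff, Prod.ext_iff]
      refine ⟨?_, ?_, ?_⟩ <;> simp only [Prod.fst_sum, Prod.snd_sum, Prod.smul_fst,
        Prod.smul_snd, smul_zero, Finset.sum_const_zero, rep]
    rw [hrep]
    exact Submodule.sum_mem _ fun i _ => Submodule.smul_mem _ _ (mem0 _ (hV i))
  -- all pure-x vectors are in M
  have stepE : ∀ g : E → ℝ, ((0, g, 0) : (V → ℝ) × (E → ℝ) × (W → ℝ)) ∈ M := by
    have single : ∀ e : E,
        ((0, ind (· ∈ [e]), 0) : (V → ℝ) × (E → ℝ) × (W → ℝ)) ∈ M := by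
      intro e
      have h1 := mem0 _ (hE e)
      have h2 := stepV (ind (· ∈ [(ends e).1, (ends e).2]))
      have := M.sub_mem h1 h2
      simpa using this
    intro g
    have hrep : ((0, g, 0) : (V → ℝ) × (E → ℝ) × (W → ℝ)) =
        ∑ e : E, g e • ((0, ind (· ∈ [e]), 0) : (V → ℝ) × (E → ℝ) × (W → ℝ)) := by
      rw [Prod.ext_iff, Prod.ext_iff]
      refine ⟨?_, ?_, ?_⟩ <;> simp only [Prod.fst_sum, Prod.snd_sum, Prod.smul_fst,
        Prod.smul_snd, smul_zero, Finset.sum_const_zero, rep]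
    rw [hrep]
    exact Submodule.sum_mem _ fun e _ => Submodule.smul_mem _ _ (single e)
  -- all pure-z vectors are in M
  have stepW : ∀ h : W → ℝ, ((0, 0, h) : (V → ℝ) × (E → ℝ) × (W → ℝ)) ∈ M := by
    have single : ∀ w : W,
        ((0, 0, ind (· ∈ [w])) : (V → ℝ) × (E → ℝ) × (W → ℝ)) ∈ M := by
      intro w
      obtain ⟨L, _, hmem⟩ := hW w
      have h1 := mem0 _ hmem
      have h2 := stepV (ind (· ∈ orig w :: L.map (arcDst ends)))
      have h3 := stepE (ind (· ∈ L.map Prod.fst))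
      have := M.sub_mem (M.sub_mem h1 h2) h3
      simpa using this
    intro h
    have hrep : ((0, 0, h) : (V → ℝ) × (E → ℝ) × (W → ℝ)) =
        ∑ w : W, h w • ((0, 0, ind (· ∈ [w])) : (V → ℝ) × (E → ℝ) × (W → ℝ)) := by
      rw [Prod.ext_iff, Prod.ext_iff]
      refine ⟨?_, ?_, ?_⟩ <;> simp only [Prod.fst_sum, Prod.snd_sum, Prod.smul_fst,
        Prod.smul_snd, smul_zero, Finset.sum_const_zero, rep]
    rw [hrep]
    exact Submodule.sum_mem _ fun w _ => Submodule.smul_mem _ _ (single w)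
  have hdir : vectorSpan ℝ S = ⊤ := by
    rw [eq_top_iff]
    rintro ⟨f, g, h⟩ -
    have := M.add_mem (M.add_mem (stepV f) (stepE g)) (stepW h)
    simpa using this
  -- conclude
  have h0' : (0 : (V → ℝ) × (E → ℝ) × (W → ℝ)) ∈ affineSpan ℝ S :=
    subset_affineSpan ℝ S h0
  rw [eq_top_iff]
  intro p _
  have hp : p -ᵥ (0 : (V → ℝ) × (E → ℝ) × (W → ℝ)) ∈ (affineSpan ℝ S).direction := by
    rw [direction_affineSpan, hdir]; trivial
  have := AffineSubspace.vadd_mem_of_mem_direction hp h0'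
  simpa using this

end Stmt3
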